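/- The trace of the matrix product PhiS * PhiR equals 5 - 3*(a2^2 + b2^2 + c2^2). In particular, the trace of the image of T = S^{-1}R (the translation matrix of the modular group) under the representation does not depend on the parameters w, x, y, z. -/
import Mathlib


open Matrix

/-- The image of the order-2 generator `S` of the modular group under the paper's family of
representations into `G₂`. -/
def PhiS {K : Type*} [Field K] (a1 a2 b1 b2 c1 c2 : K) : Matrix (Fin 7) (Fin 7) K :=
  !![a1^2 - a2^2, 0, 0, 0, 2*a1*a2, 0, 0;
     0, b1^2 - b2^2, 0, 0, 0, 2*b1*b2, 0;
     0, 0, c1^2 - c2^2, 0, 0, 0, 2*c1*c2;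
     0, 0, 0, -1, 0, 0, 0;
     2*a1*a2, 0, 0, 0, a2^2 - a1^2, 0, 0;
     0, 2*b1*b2, 0, 0, 0, b2^2 - b1^2, 0;
     0, 0, 2*c1*c2, 0, 0, 0, c2^2 - c1^2]

/-- The image of the order-3 generator `R` of the modular group under the paper's family of
representations into `G₂`. -/
def PhiR {K : Type*} [Field K] (w x y z : K) : Matrix (Fin 7) (Fin 7) K :=
  !![1, 0, 0, 0, 0, 0, 0;
     0, 1, 0, 0, 0, 0, 0;
     0, 0, 1, 0, 0, 0, 0;
     0, 0, 0, -(1/2), -(3/2)*(w^2 + 3*x^2 - y^2 - 3*z^2), -3*(x*y + w*z), 3*(w*y - 3*x*z);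
     0, 0, 0, (1/2)*(w^2 + 3*x^2 - y^2 - 3*z^2), -(1/2), w*y - 3*x*z, 3*(x*y + w*z);
     0, 0, 0, 3*(x*y + w*z), -3*(w*y - 3*x*z), -(1/2), -(3/2)*(w^2 + 3*x^2 - y^2 - 3*z^2);
     0, 0, 0, -(w*y - 3*x*z), -3*(x*y + w*z), (1/2)*(w^2 + 3*x^2 - y^2 - 3*z^2), -(1/2)]

lemma cons_val_five {m : ℕ} {α : Type*} (x : α) (u : Fin (m+5) → α) :
    Matrix.vecCons x u 5 = Matrix.vecHead (Matrix.vecTail (Matrix.vecTail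
      (Matrix.vecTail (Matrix.vecTail u)))) := rfl

lemma cons_val_six {m : ℕ} {α : Type*} (x : α) (u : Fin (m+6) → α) :
    Matrix.vecCons x u 6 = Matrix.vecHead (Matrix.vecTail (Matrix.vecTail
      (Matrix.vecTail (Matrix.vecTail (Matrix.vecTail u))))) := rfl

/-- The trace of `PhiS * PhiR` (the image of the translation `T = S⁻¹R`) equals
`5 - 3*(a2² + b2² + c2²)`; in particular it is independent of `w, x, y, z`. -/
theorem stmt3 {K : Type*} [Field K] (hchar2 : (2 : K) ≠ 0) (hchar3 : (3 : K) ≠ 0)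
    (a1 a2 b1 b2 c1 c2 w x y z : K)
    (hC1a : a1^2 + a2^2 = 1) (hC1b : b1^2 + b2^2 = 1) (hC1c : c1^2 + c2^2 = 1)
    (hC2 : w^2 + 3*x^2 + y^2 + 3*z^2 = 1) :
    Matrix.trace (PhiS a1 a2 b1 b2 c1 c2 * PhiR w x y z) = 5 - 3*(a2^2 + b2^2 + c2^2) := by
  simp only [Matrix.trace, Matrix.diag, Matrix.mul_apply, PhiS, PhiR,
    Fin.sum_univ_seven, Matrix.cons_val', Matrix.cons_val_zero, Matrix.cons_val_one,
    Matrix.cons_val_two, Matrix.cons_val_three, Matrix.cons_val_four, cons_val_five,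
    cons_val_six, Matrix.head_cons, Matrix.vecHead, Matrix.vecTail, Matrix.empty_val',
    Matrix.cons_val_fin_one, Matrix.head_fin_const, Matrix.of_apply, Function.comp,
    Matrix.cons_val_succ]
  field_simp
  linear_combination (3 : K) * (hC1a + hC1b + hC1c)
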